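/- Let (A, ∘) be an anti-pre-Lie algebra and r = Σᵢ aᵢ⊗bᵢ ∈ A⊗A, with associated linear map T_r: A* → A defined by ⟨T_r(ζ), η⟩ = ⟨r, ζ⊗η⟩. Then r is a solution of the anti-pre-Lie Yang–Baxter equation S(r) = r₁₂∘r₂₃ + r₁₂∘r₁₃ - [r₁₃, r₂₃] = 0 if and only if [T_r(ζ), T_r(η)] = T_r(L_∘*(T_{τ(r)}(ζ))η + L_∘*(T_r(η))ζ) for all ζ, η ∈ A*, where [x,y] = x∘y - y∘x and L_∘*(x) is the negative dual of left multiplication L_∘(x). -/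

import Mathlib

open scoped TensorProduct

/-- An anti-pre-Lie algebra structure on a vector space `A`. -/
def IsAntiPreLie {k A : Type*} [Field k] [AddCommGroup A] [Module k A]
    (c : A →ₗ[k] A →ₗ[k] A) : Prop :=
  (∀ x y z, c x (c y z) - c y (c x z) = c (c y x - c x y) z) ∧
  (∀ x y z, c (c x y - c y x) z + c (c y z - c z y) x + c (c z x - c x z) y = 0)

/-- For `r = ∑ i, a i ⊗ b i ∈ A ⊗ A`, the associated map `T_r : A* → A`,
`⟨T_r ζ, η⟩ = ⟨r, ζ ⊗ η⟩`; concretely `T_r ζ = ∑ i, ζ (a i) • b i`. -/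
def Tmap {k A ι : Type*} [Field k] [AddCommGroup A] [Module k A] [Fintype ι]
    (a b : ι → A) (ζ : Module.Dual k A) : A :=
  ∑ i, ζ (a i) • b i

/-- Contraction `ζ ⊗ η ⊗ id : A ⊗ A ⊗ A → A`. -/
noncomputable def contr {k A : Type*} [Field k] [AddCommGroup A] [Module k A]
    (ζ η : Module.Dual k A) : (A ⊗[k] A ⊗[k] A) →ₗ[k] A :=
  (TensorProduct.lid k A).toLinearMap ∘ₗ
    TensorProduct.map ζ
      ((TensorProduct.lid k A).toLinearMap ∘ₗ TensorProduct.map η LinearMap.id) ∘ₗ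
    (TensorProduct.assoc k A A A).toLinearMap

lemma contr_tmul {k A : Type*} [Field k] [AddCommGroup A] [Module k A]
    (ζ η : Module.Dual k A) (x y z : A) :
    contr ζ η (x ⊗ₜ[k] y ⊗ₜ[k] z) = ζ x • η y • z := by
  simp [contr, TensorProduct.smul_tmul', smul_smul, mul_comm]

/-- The contractions separate points of `A ⊗ A ⊗ A`. -/
lemma contr_sep {k A : Type*} [Field k] [AddCommGroup A] [Module k A]
    (t : A ⊗[k] A ⊗[k] A) (h : ∀ ζ η : Module.Dual k A, contr ζ η t = 0) : t = 0 := by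
  set B := Module.Basis.ofVectorSpace k A with hB
  set C := (B.tensorProduct B).tensorProduct B with hC
  apply C.repr.injective
  rw [map_zero]
  ext p
  obtain ⟨⟨i, j⟩, l⟩ := p
  have h2 : ((Finsupp.lapply ((i, j), l)).comp C.repr.toLinearMap :
        (A ⊗[k] A ⊗[k] A) →ₗ[k] k) =
      (Finsupp.lapply l) ∘ₗ B.repr.toLinearMap ∘ₗ contr (B.coord i) (B.coord j) := by
    apply C.ext
    rintro ⟨⟨i', j'⟩, l'⟩
    simp only [hC, Module.Basis.tensorProduct_apply, LinearMap.coe_comp, Function.comp_apply,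
      LinearEquiv.coe_toLinearMap, Module.Basis.tensorProduct_repr_tmul_apply, Module.Basis.repr_self,
      Finsupp.lapply_apply, contr_tmul, Module.Basis.coord_apply, Finsupp.single_apply, map_smul,
      smul_eq_mul]
    ring
  have := LinearMap.congr_fun h2 t
  simp only [LinearMap.coe_comp, Function.comp_apply, LinearEquiv.coe_toLinearMap,
    Finsupp.lapply_apply] at this
  rw [this, h (B.coord i) (B.coord j), map_zero]
  simp

/-- Value of the contraction on `S(r)`. -/
lemma contr_S {k A ι : Type*} [Field k] [AddCommGroup A] [Module k A] [Fintype ι]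
    (c : A →ₗ[k] A →ₗ[k] A) (a b : ι → A) (ζ η : Module.Dual k A) :
    contr η ζ ((∑ i, ∑ j, a i ⊗ₜ[k] (c (b i) (a j)) ⊗ₜ[k] b j) +
      (∑ i, ∑ j, (c (a i) (a j)) ⊗ₜ[k] b i ⊗ₜ[k] b j) -
      (∑ i, ∑ j, a i ⊗ₜ[k] a j ⊗ₜ[k] (c (b i) (b j) - c (b j) (b i)))) =
    (c (Tmap a b ζ) (Tmap a b η) - c (Tmap a b η) (Tmap a b ζ)) -
      Tmap a b (-((c (Tmap b a ζ)).dualMap η) + -((c (Tmap a b η)).dualMap ζ)) := by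
  simp only [map_add, map_sub, map_sum, contr_tmul, Tmap, map_smul, LinearMap.sum_apply,
    LinearMap.smul_apply, LinearMap.dualMap_apply, LinearMap.coe_comp, Function.comp_apply,
    LinearMap.add_apply, LinearMap.neg_apply, smul_smul, smul_sub, smul_add, neg_smul, add_smul,
    Finset.sum_sub_distrib, Finset.sum_add_distrib, Finset.sum_smul, Finset.smul_sum, neg_neg,
    sub_eq_add_neg, neg_add, Finset.sum_neg_distrib, TensorProduct.tmul_add,
    TensorProduct.tmul_neg, map_neg, smul_eq_mul, smul_neg]
  have hswap : ∀ f : ι → ι → A, (∑ x, ∑ y, f x y) = ∑ x, ∑ y, f y x :=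
    fun f => Finset.sum_comm
  rw [hswap (fun x y => (ζ (b y) * η ((c (a y)) (a x))) • b x),
      hswap (fun x y => (η (a y) * ζ ((c (b y)) (a x))) • b x),
      hswap (fun x y => (ζ (a x) * η (a y)) • (c (b y)) (b x))]
  simp only [mul_comm]
  abel

/-- for `r = ∑ i, a i ⊗ b i` in an anti-pre-Lie algebra, `r` solves the
anti-pre-Lie Yang–Baxter equation `S(r) = r₁₂∘r₂₃ + r₁₂∘r₁₃ - [r₁₃,r₂₃] = 0` iff
`[T_r(ζ), T_r(η)] = T_r(L_∘*(T_{τ(r)}(ζ))η + L_∘*(T_r(η))ζ)` for all `ζ, η ∈ A*`,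
where `L_∘*(x)ζ = -(ζ ∘ L_∘(x))`. -/
theorem aplYBE_iff_operator {k A ι : Type*} [Field k] [AddCommGroup A] [Module k A]
    [Fintype ι] (c : A →ₗ[k] A →ₗ[k] A) (h : IsAntiPreLie c) (a b : ι → A) :
    ((∑ i, ∑ j, a i ⊗ₜ[k] (c (b i) (a j)) ⊗ₜ[k] b j) +
      (∑ i, ∑ j, (c (a i) (a j)) ⊗ₜ[k] b i ⊗ₜ[k] b j) -
      (∑ i, ∑ j, a i ⊗ₜ[k] a j ⊗ₜ[k] (c (b i) (b j) - c (b j) (b i))) = 0)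
    ↔ ∀ ζ η : Module.Dual k A,
      c (Tmap a b ζ) (Tmap a b η) - c (Tmap a b η) (Tmap a b ζ) =
        Tmap a b (-((c (Tmap b a ζ)).dualMap η) + -((c (Tmap a b η)).dualMap ζ)) := by
  constructor
  · intro hS ζ η
    have h1 := contr_S c a b ζ η
    rw [hS, map_zero] at h1
    exact sub_eq_zero.mp h1.symm
  · intro hop
    apply contr_sep
    intro ζ η
    have h1 := contr_S c a b η ζ
    rw [h1, hop η ζ, sub_self]
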